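/- Let $t_0\ge 2$, $0<\mu<1/10$, and let $V=(V_1,V_2)$ be a bounded $C^1$ solution on $[t_0,\infty)$ of $\partial_t V_1 = \frac{-1}{2t}V_1V_2^2 + K_1(t)$, $\partial_t V_2 = \frac{-1}{2t}V_1^2V_2 + K_2(t)$ with $|K_j(t)|\le At^{2\mu-3/2}$. Suppose $m := \lim_{t\to\infty}(V_1(t)^2 - V_2(t)^2) = 0$. Then both $V_1(t)\to 0$ and $V_2(t)\to 0$ as $t\to\infty$, with $|V_1(t)| \le C(\log t)^{-1/2}$. -/

import Mathlib

open Real MeasureTheory Set Filter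

/-- If `h' t` is `O(t^(p-1))` (with explicit constant) and `h → 0` at infinity,
then `|h t| ≤ c t^p`. -/
lemma decay_bound_aux {t0 p c : ℝ} (ht0 : 2 ≤ t0) (hp : p < 0) (hc : 0 ≤ c)
    (h h' : ℝ → ℝ)
    (hderiv : ∀ t, t0 ≤ t → HasDerivAt h (h' t) t)
    (hbound : ∀ t, t0 ≤ t → |h' t| ≤ c * (-p) * t ^ (p - 1))
    (hlim : Tendsto h atTop (nhds 0)) :
    ∀ t, t0 ≤ t → |h t| ≤ c * t ^ p := by
  have hpos : ∀ t : ℝ, t0 ≤ t → (0:ℝ) < t := fun t ht => by linarith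
  have hrpow : ∀ t : ℝ, t0 ≤ t → HasDerivAt (fun x : ℝ => c * x ^ p)
      (c * (p * t ^ (p - 1))) t := fun t ht =>
    (Real.hasDerivAt_rpow_const (Or.inl (hpos t ht).ne')).const_mul c
  -- upper bound function g₊ = h - c t^p is monotone on [t0, ∞)
  have hmono : MonotoneOn (fun t => h t - c * t ^ p) (Ici t0) := by
    apply monotoneOn_of_deriv_nonneg (convex_Ici t0)
    · intro t ht
      exact (((hderiv t ht).sub (hrpow t ht)).continuousAt).continuousWithinAt
    · intro t ht
      rw [interior_Ici] at ht
      exact (((hderiv t (le_of_lt ht)).sub (hrpow t (le_of_lt ht))).differentiableAt).differentiableWithinAt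
    · intro t ht
      rw [interior_Ici] at ht
      have ht' : t0 ≤ t := le_of_lt ht
      rw [show deriv (fun t => h t - c * t ^ p) t = h' t - c * (p * t ^ (p - 1)) from ((hderiv t ht').sub (hrpow t ht')).deriv]
      have hb := hbound t ht'
      have h1 : -(c * (-p) * t ^ (p-1)) ≤ h' t := (abs_le.1 hb).1
      nlinarith [Real.rpow_nonneg (hpos t ht').le (p-1)]
  have hanti : AntitoneOn (fun t => h t + c * t ^ p) (Ici t0) := by
    apply antitoneOn_of_deriv_nonpos (convex_Ici t0)
    · intro t ht
      exact (((hderiv t ht).add (hrpow t ht)).continuousAt).continuousWithinAt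
    · intro t ht
      rw [interior_Ici] at ht
      exact (((hderiv t (le_of_lt ht)).add (hrpow t (le_of_lt ht))).differentiableAt).differentiableWithinAt
    · intro t ht
      rw [interior_Ici] at ht
      have ht' : t0 ≤ t := le_of_lt ht
      rw [show deriv (fun t => h t + c * t ^ p) t = h' t + c * (p * t ^ (p - 1)) from ((hderiv t ht').add (hrpow t ht')).deriv]
      have hb := hbound t ht'
      have h1 : h' t ≤ c * (-p) * t ^ (p-1) := (abs_le.1 hb).2
      nlinarith [Real.rpow_nonneg (hpos t ht').le (p-1)]
  have hrlim : Tendsto (fun t : ℝ => c * t ^ p) atTop (nhds 0) := by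
    have := (tendsto_rpow_neg_atTop (neg_pos.2 hp)).const_mul c
    simpa [neg_neg] using this
  intro t ht
  rw [abs_le]
  constructor
  · -- from antitone: h t + c t^p ≥ lim = 0
    have hlim2 : Tendsto (fun t => h t + c * t ^ p) atTop (nhds 0) := by
      simpa using hlim.add hrlim
    have : 0 ≤ h t + c * t ^ p := by
      refine le_of_tendsto hlim2 ?_
      filter_upwards [eventually_ge_atTop t] with s hs
      exact hanti (mem_Ici.2 ht) (mem_Ici.2 (le_trans ht hs)) hs
    linarith
  · have hlim2 : Tendsto (fun t => h t - c * t ^ p) atTop (nhds 0) := by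
      simpa using hlim.sub hrlim
    have : h t - c * t ^ p ≤ 0 := by
      refine ge_of_tendsto hlim2 ?_
      filter_upwards [eventually_ge_atTop t] with s hs
      exact hmono (mem_Ici.2 ht) (mem_Ici.2 (le_trans ht hs)) hs
    linarith

open Real MeasureTheory Set Filter

lemma log_barrier_aux {t0 δ Cc : ℝ} (ht0 : 2 ≤ t0) (hδ : 1 < δ) (hCc : 0 ≤ Cc)
    (u u' : ℝ → ℝ)
    (hderiv : ∀ t, t0 ≤ t → HasDerivAt u (u' t) t)
    (hub : ∀ t, t0 ≤ t → u' t ≤ -(u t)^2 / t + Cc * t ^ (-δ)) :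
    ∃ b : ℝ, 0 ≤ b ∧ ∀ t, t0 ≤ t → u t ≤ b / Real.log t := by
  set ε : ℝ := δ - 1 with hε
  have hε0 : 0 < ε := by simp only [hε]; linarith
  set S : ℝ := 16 / ε ^ 2 with hS
  have hS0 : 0 ≤ S := by positivity
  have hlogt0 : 0 < Real.log t0 := Real.log_pos (by linarith)
  set b : ℝ := max (|u t0| * Real.log t0) (Cc * S) + 2 with hb
  have hb2 : 2 ≤ b := by
    have : 0 ≤ max (|u t0| * Real.log t0) (Cc * S) :=
      le_max_of_le_right (by positivity)
    linarith
  refine ⟨b, by linarith, ?_⟩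
  have hkey : ∀ x : ℝ, t0 ≤ x → Cc * x ^ (-ε) * (Real.log x) ^ 2 ≤ Cc * S := by
    intro x hx
    have hx2 : (2:ℝ) ≤ x := le_trans ht0 hx
    have hx0 : (0:ℝ) < x := by linarith
    have hlx : 0 ≤ Real.log x := Real.log_nonneg (by linarith)
    have h1 : Real.log x ≤ x ^ (ε/4) / (ε/4) :=
      Real.log_le_rpow_div hx0.le (by positivity)
    have h2 : (Real.log x)^2 ≤ (x ^ (ε/4))^2 / (ε/4)^2 := by
      have := pow_le_pow_left₀ hlx h1 2
      rwa [div_pow] at this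
    have h3 : (x ^ (ε/4)) ^ 2 = x ^ (ε/2) := by
      rw [← Real.rpow_natCast (x ^ (ε/4)) 2, ← Real.rpow_mul hx0.le]
      congr 1
      push_cast
      ring
    have h4 : x ^ (-ε) * x ^ (ε/2) = x ^ (-(ε/2)) := by
      rw [← Real.rpow_add hx0]; congr 1; ring
    have h5 : x ^ (-(ε/2)) ≤ 1 :=
      Real.rpow_le_one_of_one_le_of_nonpos (by linarith) (by linarith)
    have hxne : 0 ≤ x ^ (-ε) := Real.rpow_nonneg hx0.le _
    have h6 : x ^ (-ε) * (Real.log x) ^ 2 ≤ S := by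
      calc x ^ (-ε) * (Real.log x) ^ 2 ≤ x ^ (-ε) * ((x ^ (ε/4)) ^ 2 / (ε/4) ^ 2) := by
            exact mul_le_mul_of_nonneg_left h2 hxne
        _ = (x ^ (-ε) * x ^ (ε/2)) / (ε/4)^2 := by rw [h3]; ring
        _ = x ^ (-(ε/2)) / (ε/4)^2 := by rw [h4]
        _ ≤ 1 / (ε/4)^2 := by gcongr
        _ = S := by rw [hS]; field_simp; ring
    calc Cc * x ^ (-ε) * (Real.log x) ^ 2 = Cc * (x ^ (-ε) * (Real.log x)^2) := by ring
      _ ≤ Cc * S := mul_le_mul_of_nonneg_left h6 hCc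
  intro t ht
  set B : ℝ → ℝ := fun x => b / Real.log x with hBdef
  set B' : ℝ → ℝ := fun x => -(b * x⁻¹) / (Real.log x) ^ 2 with hB'def
  have hBd : ∀ x : ℝ, t0 ≤ x → HasDerivAt B (B' x) x := by
    intro x hx
    have hx0 : (0:ℝ) < x := by linarith
    have hlx : Real.log x ≠ 0 := ne_of_gt (Real.log_pos (by linarith))
    have hd : HasDerivAt B _ x := (hasDerivAt_const x b).div (Real.hasDerivAt_log hx0.ne') hlx
    convert hd using 1
    simp only [hB'def]
    ring
  have hcont : ContinuousOn u (Icc t0 t) := by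
    intro x hx
    exact ((hderiv x hx.1).continuousAt).continuousWithinAt
  have hderw : ∀ x ∈ Ico t0 t, HasDerivWithinAt u (u' x) (Ici x) x := by
    intro x hx
    exact ((hderiv x hx.1).hasDerivWithinAt)
  have hinit : u t0 ≤ B t0 := by
    have h0 : u t0 ≤ |u t0| := le_abs_self _
    have h2 : |u t0| * Real.log t0 ≤ b := by
      have := le_max_left (|u t0| * Real.log t0) (Cc * S); linarith
    have : u t0 ≤ b / Real.log t0 := by
      rw [le_div_iff₀ hlogt0]
      nlinarith [abs_nonneg (u t0)]
    exact this
  have hBcont : ContinuousOn B (Icc t0 t) := by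
    intro x hx
    exact ((hBd x hx.1).continuousAt).continuousWithinAt
  have hBderw : ∀ x ∈ Ico t0 t, HasDerivWithinAt B (B' x) (Ici x) x := by
    intro x hx
    exact (hBd x hx.1).hasDerivWithinAt
  have hbound : ∀ x ∈ Ico t0 t, u x = B x → u' x < B' x := by
    intro x hx hcross
    have hx1 : t0 ≤ x := hx.1
    have hx2 : (2:ℝ) ≤ x := le_trans ht0 hx1
    have hx0 : (0:ℝ) < x := by linarith
    have hL : 0 < Real.log x := Real.log_pos (by linarith)
    have hLne : Real.log x ≠ 0 := ne_of_gt hL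
    have hcross' : u x = b / Real.log x := hcross
    have h1 : u' x ≤ -(b / Real.log x)^2 / x + Cc * x ^ (-δ) := by
      have := hub x hx1; rw [hcross'] at this; exact this
    have hxd : x ^ (-δ) * x = x ^ (-ε) := by
      rw [← Real.rpow_add_one hx0.ne']; congr 1; simp only [hε]; ring
    have h2 : Cc * x ^ (-δ) * (x * (Real.log x)^2) < b^2 - b := by
      have e : Cc * x ^ (-δ) * (x * (Real.log x)^2) = Cc * x ^ (-ε) * (Real.log x)^2 := by
        rw [← hxd]; ring
      rw [e]
      have hk := hkey x hx1
      have hCS : Cc * S ≤ b - 2 := by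
        have := le_max_right (|u t0| * Real.log t0) (Cc * S); linarith
      nlinarith
    have hP : 0 < x * (Real.log x)^2 := by positivity
    have h3 : Cc * x ^ (-δ) < (b^2 - b) / (x * (Real.log x)^2) := by
      rw [lt_div_iff₀ hP]; linarith
    have h4 : -(b/Real.log x)^2/x + (b^2-b)/(x*(Real.log x)^2) = -(b * x⁻¹)/(Real.log x)^2 := by
      field_simp
      ring
    calc u' x ≤ -(b / Real.log x)^2 / x + Cc * x ^ (-δ) := h1
      _ < -(b/Real.log x)^2/x + (b^2-b)/(x*(Real.log x)^2) := by linarith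
      _ = B' x := by rw [h4]
  have main := image_le_of_deriv_right_lt_deriv_boundary' hcont hderw hinit hBcont hBderw hbound
  exact main ⟨ht, le_refl t⟩

set_option maxHeartbeats 1000000 in
theorem profile_zero_mass_decay
    (t0 μ A M : ℝ) (ht0 : 2 ≤ t0) (hμ : 0 < μ) (hμ' : μ < 1/10) (hA : 0 ≤ A) (hM : 0 ≤ M)
    (V1 V2 K1 K2 : ℝ → ℝ)
    (hK1C : ContinuousOn K1 (Ici t0)) (hK2C : ContinuousOn K2 (Ici t0))
    (hK1 : ∀ t, t0 ≤ t → |K1 t| ≤ A * t ^ (2*μ - 3/2))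
    (hK2 : ∀ t, t0 ≤ t → |K2 t| ≤ A * t ^ (2*μ - 3/2))
    (hV : ∀ t, t0 ≤ t → Real.sqrt ((V1 t)^2 + (V2 t)^2) ≤ M)
    (hode1 : ∀ t, t0 ≤ t → HasDerivAt V1 (-1 / (2*t) * V1 t * (V2 t)^2 + K1 t) t)
    (hode2 : ∀ t, t0 ≤ t → HasDerivAt V2 (-1 / (2*t) * (V1 t)^2 * V2 t + K2 t) t)
    (hm : Filter.Tendsto (fun t => (V1 t)^2 - (V2 t)^2) Filter.atTop (nhds 0)) :
    Filter.Tendsto V1 Filter.atTop (nhds 0) ∧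
    Filter.Tendsto V2 Filter.atTop (nhds 0) ∧
    ∃ C : ℝ, ∀ t, t0 ≤ t → |V1 t| ≤ C / Real.sqrt (Real.log t) := by
  have hpos : ∀ t : ℝ, t0 ≤ t → (0:ℝ) < t := fun t ht => by linarith
  -- pointwise bounds
  have hV1M : ∀ t, t0 ≤ t → |V1 t| ≤ M := by
    intro t ht
    have h1 : |V1 t| = Real.sqrt ((V1 t)^2) := (Real.sqrt_sq_eq_abs _).symm
    rw [h1]
    exact le_trans (Real.sqrt_le_sqrt (by nlinarith [sq_nonneg (V2 t)])) (hV t ht)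
  have hV2M : ∀ t, t0 ≤ t → |V2 t| ≤ M := by
    intro t ht
    have h1 : |V2 t| = Real.sqrt ((V2 t)^2) := (Real.sqrt_sq_eq_abs _).symm
    rw [h1]
    exact le_trans (Real.sqrt_le_sqrt (by nlinarith [sq_nonneg (V1 t)])) (hV t ht)
  -- the mass function h and its derivative
  set h : ℝ → ℝ := fun t => (V1 t)^2 - (V2 t)^2 with hhdef
  set h' : ℝ → ℝ := fun t => 2 * V1 t * K1 t - 2 * V2 t * K2 t with hh'def
  have hhd : ∀ t, t0 ≤ t → HasDerivAt h (h' t) t := by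
    intro t ht
    have ht0' : (0:ℝ) < t := hpos t ht
    have d1 := (hode1 t ht).pow 2
    have d2 := (hode2 t ht).pow 2
    have : HasDerivAt h _ t := d1.sub d2
    convert this using 1
    simp only [hh'def, Nat.cast_ofNat, pow_one]
    have h2t : (2*t)⁻¹ = 2⁻¹ * t⁻¹ := by rw [mul_inv]
    field_simp
    ring
  have hh'b : ∀ t, t0 ≤ t → |h' t| ≤ (4*M*A) * t ^ ((2*μ - 1/2) - 1) := by
    intro t ht
    have e : (2*μ - 1/2) - 1 = 2*μ - 3/2 := by ring
    rw [e]
    have hK1' := hK1 t ht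
    have hK2' := hK2 t ht
    have h1 : |2 * V1 t * K1 t| ≤ 2 * M * (A * t ^ (2*μ-3/2)) := by
      rw [abs_mul, abs_mul]
      simp only [abs_two]
      have := hV1M t ht
      have hk := abs_nonneg (K1 t)
      nlinarith [abs_nonneg (V1 t)]
    have h2 : |2 * V2 t * K2 t| ≤ 2 * M * (A * t ^ (2*μ-3/2)) := by
      rw [abs_mul, abs_mul]
      simp only [abs_two]
      have := hV2M t ht
      have hk := abs_nonneg (K2 t)
      nlinarith [abs_nonneg (V2 t)]
    calc |h' t| ≤ |2 * V1 t * K1 t| + |2 * V2 t * K2 t| := abs_sub _ _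
      _ ≤ 4*M*A * t ^ (2*μ-3/2) := by linarith
  -- decay of h
  set p : ℝ := 2*μ - 1/2 with hpdef
  have hp0 : p < 0 := by simp only [hpdef]; linarith
  set c : ℝ := (4*M*A) / (-p) with hcdef
  have hc0 : 0 ≤ c := by
    apply div_nonneg (by positivity)
    linarith
  have hcp : c * (-p) = 4*M*A := by
    rw [hcdef]
    field_simp [hp0.ne]
  have hhdecay : ∀ t, t0 ≤ t → |h t| ≤ c * t ^ p := by
    apply decay_bound_aux ht0 hp0 hc0 h h' hhd
    · intro t ht
      rw [hcp]
      exact hh'b t ht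
    · exact hm
  -- the energy u = V1² and its derivative
  set u : ℝ → ℝ := fun t => (V1 t)^2 with hudef
  set u' : ℝ → ℝ := fun t => -(V1 t)^2 * (V2 t)^2 / t + 2 * V1 t * K1 t with hu'def
  have hud : ∀ t, t0 ≤ t → HasDerivAt u (u' t) t := by
    intro t ht
    have ht0' : (0:ℝ) < t := hpos t ht
    have d1 : HasDerivAt u _ t := (hode1 t ht).pow 2
    convert d1 using 1
    simp only [hu'def, Nat.cast_ofNat, pow_one]
    field_simp
    ring
  set δ : ℝ := 3/2 - 2*μ with hδdef
  have hδ1 : 1 < δ := by simp only [hδdef]; linarith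
  set Cc : ℝ := M^2 * c + 2*M*A with hCcdef
  have hCc0 : 0 ≤ Cc := by positivity
  have hub : ∀ t, t0 ≤ t → u' t ≤ -(u t)^2 / t + Cc * t ^ (-δ) := by
    intro t ht
    have ht0' : (0:ℝ) < t := hpos t ht
    have htp : (0:ℝ) ≤ t ^ p := Real.rpow_nonneg ht0'.le _
    have hnd : -δ = p - 1 := by simp only [hδdef, hpdef]; ring
    have htp1 : t ^ (-δ) = t ^ p / t := by rw [hnd, Real.rpow_sub_one ht0'.ne']
    -- V2² = V1² - h
    have hV2sq : (V2 t)^2 = u t - h t := by simp only [hudef, hhdef]; ring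
    have hhb := hhdecay t ht
    have hu_nonneg : 0 ≤ u t := sq_nonneg _
    have huM : u t ≤ M^2 := by
      have := hV1M t ht
      have h2 : (V1 t)^2 = |V1 t|^2 := (sq_abs _).symm
      simp only [hudef]
      rw [h2]
      nlinarith [abs_nonneg (V1 t)]
    have hK1' := hK1 t ht
    have hK1'' : 2 * V1 t * K1 t ≤ 2*M*A * t ^ (2*μ-3/2) := by
      have h1 : 2 * V1 t * K1 t ≤ |2 * V1 t * K1 t| := le_abs_self _
      have h2 : |2 * V1 t * K1 t| ≤ 2 * M * (A * t ^ (2*μ-3/2)) := by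
        rw [abs_mul, abs_mul]
        simp only [abs_two]
        have := hV1M t ht
        nlinarith [abs_nonneg (V1 t), abs_nonneg (K1 t)]
      linarith
    have e23 : (2*μ - 3/2 : ℝ) = -δ := by simp only [hδdef]; ring
    rw [e23] at hK1''
    -- main estimate
    have hmain : u' t = -(u t)^2/t + (u t * h t)/t + 2 * V1 t * K1 t := by
      simp only [hu'def]
      rw [hV2sq]
      ring
    rw [hmain]
    have habs : u t * h t ≤ M^2 * (c * t ^ p) := by
      have h1 : u t * h t ≤ u t * |h t| := by
        nlinarith [le_abs_self (h t), hu_nonneg]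
      have h2 : u t * |h t| ≤ M^2 * (c * t ^ p) := by
        nlinarith [abs_nonneg (h t)]
      linarith
    have hdiv : (u t * h t)/t ≤ M^2 * c * t ^ (-δ) := by
      rw [htp1]
      calc (u t * h t)/t ≤ (M^2 * (c * t ^ p))/t := (div_le_div_iff_of_pos_right ht0').2 habs
        _ = M^2 * c * (t^p / t) := by ring
    have : Cc * t ^ (-δ) = M^2 * c * t ^ (-δ) + 2*M*A * t ^ (-δ) := by
      rw [hCcdef]; ring
    rw [this]
    linarith
  -- apply the barrier lemma
  obtain ⟨b, hb0, hbu⟩ := log_barrier_aux ht0 hδ1 hCc0 u u' hud hub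
  -- limits
  have hloglim : Tendsto (fun t : ℝ => b / Real.log t) atTop (nhds 0) :=
    tendsto_const_nhds.div_atTop Real.tendsto_log_atTop
  have hu0 : Tendsto u atTop (nhds 0) := by
    apply squeeze_zero' (g := fun t : ℝ => b / Real.log t)
    · filter_upwards [eventually_ge_atTop t0] with t ht
      exact sq_nonneg _
    · filter_upwards [eventually_ge_atTop t0] with t ht
      exact hbu t ht
    · exact hloglim
  have hV1lim : Tendsto V1 atTop (nhds 0) := by
    rw [tendsto_zero_iff_abs_tendsto_zero]
    have heq : (abs ∘ V1) = fun t => Real.sqrt (u t) := by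
      funext t; exact (Real.sqrt_sq_eq_abs (V1 t)).symm
    rw [heq]
    have := (Real.continuous_sqrt.tendsto 0).comp hu0
    simpa [Function.comp_def] using this
  have hV2sqlim : Tendsto (fun t => (V2 t)^2) atTop (nhds 0) := by
    have : (fun t => (V2 t)^2) = fun t => u t - h t := by
      funext t; simp only [hudef, hhdef]; ring
    rw [this]
    simpa using hu0.sub hm
  have hV2lim : Tendsto V2 atTop (nhds 0) := by
    rw [tendsto_zero_iff_abs_tendsto_zero]
    have heq : (abs ∘ V2) = fun t => Real.sqrt ((V2 t)^2) := by
      funext t; exact (Real.sqrt_sq_eq_abs (V2 t)).symm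
    rw [heq]
    have := (Real.continuous_sqrt.tendsto 0).comp hV2sqlim
    simpa [Function.comp_def] using this
  refine ⟨hV1lim, hV2lim, Real.sqrt b, ?_⟩
  intro t ht
  have hlt : 0 < Real.log t := Real.log_pos (by linarith)
  have h1 : |V1 t| = Real.sqrt (u t) := by
    simp only [hudef]; rw [Real.sqrt_sq_eq_abs]
  rw [h1]
  calc Real.sqrt (u t) ≤ Real.sqrt (b / Real.log t) := Real.sqrt_le_sqrt (hbu t ht)
    _ = Real.sqrt b / Real.sqrt (Real.log t) := Real.sqrt_div hb0 _
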